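/- A game m is supermodular if and only if its Möbius inversion μ_m satisfies: for all distinct i,j ∈ N and all A ⊆ N∖{i,j}, the sum over B ⊆ A of μ_m(B∪{i,j}) is nonnegative. -/

import Mathlib

open Finset

/-- A game is supermodular if `m A + m B ≤ m (A ∪ B) + m (A ∩ B)` for all `A, B`. -/
def Supermod {N : Type*} [DecidableEq N] (m : Finset N → ℝ) : Prop :=
  ∀ A B : Finset N, m A + m B ≤ m (A ∪ B) + m (A ∩ B)

/-- The Möbius inversion of a set function. -/
def mobius {N : Type*} [DecidableEq N] (m : Finset N → ℝ) (A : Finset N) : ℝ :=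
  ∑ B ∈ A.powerset, (-1 : ℝ) ^ (A.card - B.card) * m B

lemma neg_one_pow_sum {N : Type*} [DecidableEq N] (x : Finset N) :
    ∑ B ∈ x.powerset, (-1 : ℝ) ^ B.card = if x = ∅ then 1 else 0 := by
  have := @Finset.sum_powerset_neg_one_pow_card N _ x
  have h : ((∑ B ∈ x.powerset, (-1 : ℤ) ^ B.card : ℤ) : ℝ)
      = ∑ B ∈ x.powerset, (-1 : ℝ) ^ B.card := by push_cast; ring_nf
  rw [← h, this]
  split <;> norm_num

/-- Möbius inversion formula. -/
lemma sum_mobius {N : Type*} [DecidableEq N] (m : Finset N → ℝ) (hm : m ∅ = 0)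
    (C : Finset N) : ∑ B ∈ C.powerset, mobius m B = m C := by
  unfold mobius
  rw [Finset.sum_comm' (s := C.powerset) (t := fun B => B.powerset)
      (t' := C.powerset) (s' := fun D => C.powerset.filter fun B => D ⊆ B)
      (f := fun B D => (-1 : ℝ) ^ (B.card - D.card) * m D)
      (by intro B D
          simp only [mem_powerset, mem_filter]
          constructor
          · rintro ⟨h1, h2⟩; exact ⟨⟨h1, h2⟩, h2.trans h1⟩
          · rintro ⟨⟨h1, h2⟩, _⟩; exact ⟨h1, h2⟩)]
  have key : ∀ D ∈ C.powerset,
      (∑ B ∈ C.powerset.filter fun B => D ⊆ B, (-1 : ℝ) ^ (B.card - D.card) * m D)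
        = (if D = C then 1 else 0) * m D := by
    intro D hD
    rw [mem_powerset] at hD
    have : (∑ B ∈ C.powerset.filter fun B => D ⊆ B, (-1 : ℝ) ^ (B.card - D.card) * m D)
        = ∑ E ∈ (C \ D).powerset, (-1 : ℝ) ^ E.card * m D := by
      refine Finset.sum_nbij' (fun B => B \ D) (fun E => E ∪ D) ?_ ?_ ?_ ?_ ?_
      · intro B hB
        rw [mem_filter, mem_powerset] at hB
        exact mem_powerset.2 (sdiff_subset_sdiff hB.1 subset_rfl)
      · intro E hE
        rw [mem_powerset] at hE
        rw [mem_filter, mem_powerset]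
        refine ⟨union_subset (hE.trans (sdiff_subset)) hD, subset_union_right⟩
      · intro B hB
        rw [mem_filter, mem_powerset] at hB
        exact sdiff_union_of_subset hB.2
      · intro E hE
        rw [mem_powerset] at hE
        have hdisj : Disjoint E D := disjoint_of_subset_left hE sdiff_disjoint
        exact union_sdiff_cancel_right hdisj
      · intro B hB
        rw [mem_filter, mem_powerset] at hB
        congr 2
        exact (Nat.sub_eq_iff_eq_add (card_le_card hB.2)).2 (card_sdiff_add_card_eq_card hB.2).symm
    rw [this, ← Finset.sum_mul, neg_one_pow_sum]
    have heq : (C \ D = ∅) = (D = C) := by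
      rw [sdiff_eq_empty_iff_subset]
      exact propext ⟨fun h => subset_antisymm hD h, fun h => h ▸ subset_rfl⟩
    rw [if_congr (iff_of_eq heq) rfl rfl]
  rw [Finset.sum_congr rfl key]
  simp only [ite_mul, one_mul, zero_mul]
  rw [Finset.sum_ite_eq' C.powerset C m]
  simp [mem_powerset]

/-- The key identity: the sum of Möbius values is a second difference. -/
lemma pairsum {N : Type*} [DecidableEq N] (m : Finset N → ℝ) (hm : m ∅ = 0)
    (i j : N) (hij : i ≠ j) (A : Finset N) (hi : i ∉ A) (hj : j ∉ A) :
    ∑ B ∈ A.powerset, mobius m (B ∪ {i, j})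
      = m (insert i (insert j A)) + m A - m (insert i A) - m (insert j A) := by
  have hijA : i ∉ insert j A := by simp [hi, hij]
  have hrw : ∀ B : Finset N, B ∪ {i, j} = insert i (insert j B) := by
    intro B; ext x; simp only [mem_union, mem_insert, mem_singleton]; tauto
  have h1 : m (insert i (insert j A))
      = (∑ t ∈ (insert j A).powerset, mobius m t)
        + ∑ t ∈ (insert j A).powerset, mobius m (insert i t) := by
    rw [← Finset.sum_powerset_insert hijA, sum_mobius m hm]
  have h2 : (∑ t ∈ (insert j A).powerset, mobius m (insert i t))
      = (∑ t ∈ A.powerset, mobius m (insert i t))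
        + ∑ t ∈ A.powerset, mobius m (insert i (insert j t)) :=
    Finset.sum_powerset_insert hj _
  have h3 : m (insert i A)
      = m A + ∑ t ∈ A.powerset, mobius m (insert i t) := by
    conv_lhs => rw [← sum_mobius m hm (insert i A)]
    rw [Finset.sum_powerset_insert hi, sum_mobius m hm]
  have h4 : m (insert j A) = ∑ t ∈ (insert j A).powerset, mobius m t :=
    (sum_mobius m hm _).symm
  calc ∑ B ∈ A.powerset, mobius m (B ∪ {i, j})
      = ∑ B ∈ A.powerset, mobius m (insert i (insert j B)) := by
        exact Finset.sum_congr rfl fun B _ => by rw [hrw]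
    _ = m (insert i (insert j A)) + m A - m (insert i A) - m (insert j A) := by
        rw [h1, h2] at *; linarith

lemma diff_mono {N : Type*} [DecidableEq N] (m : Finset N → ℝ)
    (h : ∀ i j : N, i ≠ j → ∀ A : Finset N, i ∉ A → j ∉ A →
      m (insert i A) + m (insert j A) ≤ m (insert i (insert j A)) + m A) :
    ∀ (n : ℕ) (C D : Finset N) (i : N), C ⊆ D → i ∉ D → (D \ C).card = n →
      m (insert i C) + m D ≤ m (insert i D) + m C := by
  intro n
  induction n with
  | zero =>
    intro C D i hCD hiD hc
    have : D = C := subset_antisymm (by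
      intro x hx
      by_contra hxC
      exact absurd (card_eq_zero.1 hc ▸ mem_sdiff.2 ⟨hx, hxC⟩) (notMem_empty x)) hCD
    subst this; linarith
  | succ n ih =>
    intro C D i hCD hiD hc
    have hne : (D \ C).Nonempty := by rw [← card_pos, hc]; omega
    obtain ⟨j, hj⟩ := hne
    rw [mem_sdiff] at hj
    set D0 := D.erase j with hD0
    have hCD0 : C ⊆ D0 := fun x hx => mem_erase.2 ⟨fun hxj => hj.2 (hxj ▸ hx), hCD hx⟩
    have hiD0 : i ∉ D0 := fun hx => hiD (mem_of_mem_erase hx)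
    have hjD0 : j ∉ D0 := notMem_erase j D
    have hije : i ≠ j := fun hq => hiD (hq ▸ hj.1)
    have hcard : (D0 \ C).card = n := by
      have : D0 \ C = (D \ C).erase j := by
        ext x; simp only [hD0, mem_sdiff, mem_erase]; tauto
      rw [this, card_erase_of_mem (mem_sdiff.2 hj), hc]
      omega
    have h1 := ih C D0 i hCD0 hiD0 hcard
    have h2 := h i j hije D0 hiD0 hjD0
    have hins : insert j D0 = D := insert_erase hj.1
    rw [hins] at h2
    linarith

theorem stmt3 {N : Type*} [Fintype N] [DecidableEq N]
    (m : Finset N → ℝ) (hm : m ∅ = 0) :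
    Supermod m ↔
      ∀ i j : N, i ≠ j → ∀ A : Finset N, i ∉ A → j ∉ A →
        0 ≤ ∑ B ∈ A.powerset, mobius m (B ∪ {i, j}) := by
  constructor
  · intro hsm i j hij A hi hj
    rw [pairsum m hm i j hij A hi hj]
    have := hsm (insert i A) (insert j A)
    have hu : insert i A ∪ insert j A = insert i (insert j A) := by
      ext x; simp only [mem_union, mem_insert]; tauto
    have hint : insert i A ∩ insert j A = A := by
      ext x; simp only [mem_inter, mem_insert]
      constructor
      · rintro ⟨hx1 | hx1, hx2 | hx2⟩
        · exact absurd (hx1 ▸ hx2) hij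
        · exact absurd (hx1 ▸ hx2) hi
        · assumption
        · assumption
      · exact fun hx => ⟨Or.inr hx, Or.inr hx⟩
    rw [hu, hint] at this
    linarith
  · intro h
    have h' : ∀ i j : N, i ≠ j → ∀ A : Finset N, i ∉ A → j ∉ A →
        m (insert i A) + m (insert j A) ≤ m (insert i (insert j A)) + m A := by
      intro i j hij A hi hj
      have := h i j hij A hi hj
      rw [pairsum m hm i j hij A hi hj] at this
      linarith
    intro A B
    -- induction on card (A \ B)
    suffices hkey : ∀ (n : ℕ) (A B : Finset N), (A \ B).card = n →
        m A + m B ≤ m (A ∪ B) + m (A ∩ B) from hkey _ A B rfl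
    intro n
    induction n with
    | zero =>
      intro A B hc
      have hAB : A ⊆ B := by
        intro x hx
        by_contra hxB
        exact absurd (card_eq_zero.1 hc ▸ mem_sdiff.2 ⟨hx, hxB⟩) (notMem_empty x)
      rw [union_eq_right.2 hAB, inter_eq_left.2 hAB]
      linarith
    | succ n ih =>
      intro A B hc
      have hne : (A \ B).Nonempty := by rw [← card_pos, hc]; omega
      obtain ⟨i, hi⟩ := hne
      rw [mem_sdiff] at hi
      set A' := A.erase i with hA'
      have hcard : (A' \ B).card = n := by
        have : A' \ B = (A \ B).erase i := by
          ext x; simp only [hA', mem_sdiff, mem_erase]; tauto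
        rw [this, card_erase_of_mem (mem_sdiff.2 hi), hc]
        omega
      have hIH := ih A' B hcard
      have hint : A' ∩ B = A ∩ B := by
        ext x; simp only [hA', mem_inter, mem_erase]
        exact ⟨fun ⟨⟨_, h1⟩, h2⟩ => ⟨h1, h2⟩,
          fun ⟨h1, h2⟩ => ⟨⟨fun hq => hi.2 (hq ▸ h2), h1⟩, h2⟩⟩
      have hsub : A' ⊆ A' ∪ B := subset_union_left
      have hiU : i ∉ A' ∪ B := by
        simp only [mem_union, hA', mem_erase]
        rintro (⟨hq, _⟩ | hq)
        · exact hq rfl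
        · exact hi.2 hq
      have hdm := diff_mono m h' ((A' ∪ B) \ A').card A' (A' ∪ B) i hsub hiU rfl
      have hins1 : insert i A' = A := insert_erase hi.1
      have hins2 : insert i (A' ∪ B) = A ∪ B := by
        rw [← hins1, insert_union]
      rw [hins1, hins2] at hdm
      rw [hint] at hIH
      linarith
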